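/- Let W be the complex vector space of all functions f : Hom(F_q^n, U) → ℂ. For each n×n symmetric matrix A over F_q define ω(A) ∈ GL(W) by (ω(A)f)(S) = ψ((1/2)Tr(G_{β_S} A))·f(S), where G_{β_S} is the Gram matrix of β_S; then A ↦ ω(A) is a representation of the additive group of n×n symmetric matrices on W. Fix a surjective linear map T : F_q^n → U. Then the eigenspace {f ∈ W : ω(A)f = ψ((1/2)Tr(G_{β_T} A))·f for all symmetric A} is exactly the space of functions supported on the orbit O_T = {r ∘ T : r ∈ O_β}. -/

import Mathlib

open Matrix
open scoped Kronecker

/-- The subgroup of invertible matrices `g` preserving the bilinear form with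
matrix `M`, i.e. satisfying `gᵀ * M * g = M`. -/
def matIsom (F : Type) [Field F] (ι : Type) [Fintype ι] [DecidableEq ι]
    (M : Matrix ι ι F) : Subgroup (Matrix ι ι F)ˣ where
  carrier := {g | (g : Matrix ι ι F)ᵀ * M * g = M}
  one_mem' := by simp
  mul_mem' := by
    intro a b ha hb
    simp only [Set.mem_setOf_eq, Units.val_mul, transpose_mul] at *
    calc (b : Matrix ι ι F)ᵀ * (a : Matrix ι ι F)ᵀ * M * ((a : Matrix ι ι F) * b)
        = (b : Matrix ι ι F)ᵀ * ((a : Matrix ι ι F)ᵀ * M * a) * b := by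
          simp only [Matrix.mul_assoc]
      _ = M := by rw [ha, hb]
  inv_mem' := by
    intro a ha
    simp only [Set.mem_setOf_eq] at *
    set b : Matrix ι ι F := ↑a⁻¹ with hb
    have h1 : (a : Matrix ι ι F) * b = 1 := by
      rw [hb, ← Units.val_mul, mul_inv_cancel, Units.val_one]
    calc bᵀ * M * b = bᵀ * ((a : Matrix ι ι F)ᵀ * M * a) * b := by rw [ha]
      _ = ((a : Matrix ι ι F) * b)ᵀ * M * ((a : Matrix ι ι F) * b) := by
          simp only [transpose_mul, Matrix.mul_assoc]
      _ = M := by rw [h1]; simp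

/-- The matrix of the standard symplectic form on `F^(2n)`. -/
def Jmat (F : Type) [Field F] (n : ℕ) : Matrix (Fin n ⊕ Fin n) (Fin n ⊕ Fin n) F :=
  fromBlocks 0 1 (-1) 0

/-- The symplectic group `Sp_{2n}(F)`: matrices with `gᵀ J g = J`. -/
abbrev Sp (F : Type) [Field F] (n : ℕ) : Subgroup (Matrix (Fin n ⊕ Fin n) (Fin n ⊕ Fin n) F)ˣ :=
  matIsom F (Fin n ⊕ Fin n) (Jmat F n)

/-- The invertible matrix `[[1, A], [0, 1]]`. -/
def shearUnit (F : Type) [Field F] (n : ℕ) (A : Matrix (Fin n) (Fin n) F) :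
    (Matrix (Fin n ⊕ Fin n) (Fin n ⊕ Fin n) F)ˣ where
  val := fromBlocks 1 A 0 1
  inv := fromBlocks 1 (-A) 0 1
  val_inv := by
    rw [fromBlocks_multiply, ← fromBlocks_one (l := Fin n) (m := Fin n)]
    simp
  inv_val := by
    rw [fromBlocks_multiply, ← fromBlocks_one (l := Fin n) (m := Fin n)]
    simp

lemma shearUnit_mem (F : Type) [Field F] (n : ℕ) (A : Matrix (Fin n) (Fin n) F)
    (hA : A.IsSymm) : shearUnit F n A ∈ Sp F n := by
  show (fromBlocks 1 A 0 1 : Matrix (Fin n ⊕ Fin n) (Fin n ⊕ Fin n) F)ᵀ * Jmat F n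
      * fromBlocks 1 A 0 1 = Jmat F n
  have := hA.eq
  simp [Jmat, fromBlocks_transpose, fromBlocks_multiply, this]

/-- The element `n_A = [[1, A], [0, 1]]` of the Siegel unipotent radical of `Sp_{2n}(F)`,
for a symmetric matrix `A`. -/
def nUnip (F : Type) [Field F] (n : ℕ) (A : Matrix (Fin n) (Fin n) F) (hA : A.IsSymm) :
    ↥(Sp F n) :=
  ⟨shearUnit F n A, shearUnit_mem F n A hA⟩

/-- A representation is irreducible if the space is nonzero and the only invariant
subspaces are `⊥` and `⊤`. -/
def IsIrredRep {G : Type} [Monoid G] {W : Type} [AddCommGroup W] [Module ℂ W]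
    (ρ : Representation ℂ G W) : Prop :=
  Nontrivial W ∧ ∀ p : Submodule ℂ W, (∀ g : G, ∀ w ∈ p, ρ g w ∈ p) → p = ⊥ ∨ p = ⊤

/-- Isomorphism of representations. -/
def RepIso {G : Type} [Monoid G] {W₁ W₂ : Type} [AddCommGroup W₁] [Module ℂ W₁]
    [AddCommGroup W₂] [Module ℂ W₂]
    (ρ₁ : Representation ℂ G W₁) (ρ₂ : Representation ℂ G W₂) : Prop :=
  ∃ e : W₁ ≃ₗ[ℂ] W₂, ∀ (g : G) (w : W₁), e (ρ₁ g w) = ρ₂ g (e w)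

/-- The multiplicity `m_B(ρ)` of the character `ψ_B : n_A ↦ ψ(Tr(B * A))` of the Siegel
unipotent radical `N` in the restriction of `ρ` to `N`. -/
noncomputable def multB {F : Type} [Field F] {n : ℕ} {W : Type} [AddCommGroup W] [Module ℂ W]
    (ρ : Representation ℂ (↥(Sp F n)) W) (ψ : AddChar F ℂ) (B : Matrix (Fin n) (Fin n) F) : ℕ :=
  Module.finrank ℂ
    ↥(⨅ A : {A : Matrix (Fin n) (Fin n) F // A.IsSymm},
      Module.End.eigenspace (ρ (nUnip F n A.1 A.2)) (ψ (Matrix.trace (B * A.1))))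

/-- Congruence of matrices: `B'` is obtained from `B` by the change-of-basis action of
an invertible matrix. -/
def MatCongruent {F : Type} [Field F] {n : ℕ} (B B' : Matrix (Fin n) (Fin n) F) : Prop :=
  ∃ C : (Matrix (Fin n) (Fin n) F)ˣ, B' = (C : Matrix (Fin n) (Fin n) F)ᵀ * B * C

/-- A bundled complex representation of `G` (on an arbitrary complex vector space). -/
structure CRep (G : Type) [Monoid G] : Type 1 where
  carrier : Type
  [acg : AddCommGroup carrier]
  [mod : Module ℂ carrier]
  ρ : Representation ℂ G carrier

attribute [instance] CRep.acg CRep.mod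

lemma negI_mem (F : Type) [Field F] (n : ℕ) :
    (-1 : (Matrix (Fin n ⊕ Fin n) (Fin n ⊕ Fin n) F)ˣ) ∈ Sp F n := by
  show ((-1 : (Matrix (Fin n ⊕ Fin n) (Fin n ⊕ Fin n) F)ˣ) : Matrix _ _ F)ᵀ * Jmat F n
      * ((-1 : (Matrix (Fin n ⊕ Fin n) (Fin n ⊕ Fin n) F)ˣ) : Matrix _ _ F) = Jmat F n
  simp

/-- The element `-I` of `Sp_{2n}(F)`. -/
def negI (F : Type) [Field F] (n : ℕ) : ↥(Sp F n) := ⟨-1, negI_mem F n⟩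

/-- A submodule is invariant under a representation. -/
def InvariantUnder {G : Type} [Monoid G] {W : Type} [AddCommGroup W] [Module ℂ W]
    (ρ : Representation ℂ G W) (p : Submodule ℂ W) : Prop :=
  ∀ g : G, ∀ w ∈ p, ρ g w ∈ p

/-- `p` is an invariant subspace on which `ρ` restricts to an irreducible
subrepresentation. -/
def IsIrreducibleSubrep {G : Type} [Monoid G] {W : Type} [AddCommGroup W] [Module ℂ W]
    (ρ : Representation ℂ G W) (p : Submodule ℂ W) : Prop :=
  InvariantUnder ρ p ∧ p ≠ ⊥ ∧
    ∀ s : Submodule ℂ W, s ≤ p → InvariantUnder ρ s → s = ⊥ ∨ s = p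

/-- Isomorphism of the subrepresentations carried by invariant subspaces `p`, `p'` of
representations `ρ`, `ρ'`. -/
def SubRepIso {G : Type} [Monoid G] {W W' : Type} [AddCommGroup W] [Module ℂ W]
    [AddCommGroup W'] [Module ℂ W']
    (ρ : Representation ℂ G W) (ρ' : Representation ℂ G W')
    (p : Submodule ℂ W) (p' : Submodule ℂ W') : Prop :=
  ∃ e : ↥p ≃ₗ[ℂ] ↥p', ∀ (g : G) (w w₂ : ↥p), ρ g ↑w = (w₂ : W) →
    ρ' g ↑(e w) = ((e w₂ : ↥p') : W')

/-- The multiplicity of the character `n_A ↦ ψ((1/2) Tr(B * A))` of the Siegel unipotent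
radical in the subrepresentation carried by the invariant subspace `p`. -/
noncomputable def multBOn {F : Type} [Field F] {n : ℕ} {W : Type} [AddCommGroup W] [Module ℂ W]
    (ρ : Representation ℂ (↥(Sp F n)) W) (ψ : AddChar F ℂ) (B : Matrix (Fin n) (Fin n) F)
    (p : Submodule ℂ W) : ℕ :=
  Module.finrank ℂ
    ↥(p ⊓ ⨅ A : {A : Matrix (Fin n) (Fin n) F // A.IsSymm},
      Module.End.eigenspace (ρ (nUnip F n A.1 A.2)) (ψ ((2 : F)⁻¹ * Matrix.trace (B * A.1))))

/-- The multiplicity `m'_B(ρ)` of the character `n_A ↦ ψ((1/2) Tr(B * A))` of the Siegel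
unipotent radical `N` in the restriction of `ρ` to `N`. -/
noncomputable def multB' {F : Type} [Field F] {n : ℕ} {W : Type} [AddCommGroup W] [Module ℂ W]
    (ρ : Representation ℂ (↥(Sp F n)) W) (ψ : AddChar F ℂ) (B : Matrix (Fin n) (Fin n) F) : ℕ :=
  Module.finrank ℂ
    ↥(⨅ A : {A : Matrix (Fin n) (Fin n) F // A.IsSymm},
      Module.End.eigenspace (ρ (nUnip F n A.1 A.2)) (ψ ((2 : F)⁻¹ * Matrix.trace (B * A.1))))

/-- The symmetric bilinear form `β_T(x, x') = β(Tx, Tx')` on `F^n`, where `β` is the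
bilinear form on `F^k` with Gram matrix `G`. -/
def betaT {F : Type} [Field F] {k n : ℕ} (G : Matrix (Fin k) (Fin k) F)
    (T : Matrix (Fin k) (Fin n) F) : (Fin n → F) → (Fin n → F) → F :=
  fun x x' => (T *ᵥ x) ⬝ᵥ (G *ᵥ (T *ᵥ x'))

/-- The subgroup of invertible matrices preserving a bilinear form `Φ` on `ι → F`. -/
def formStab (F : Type) [Field F] (ι : Type) [Fintype ι] [DecidableEq ι]
    (Φ : (ι → F) → (ι → F) → F) : Subgroup (Matrix ι ι F)ˣ where
  carrier := {g | ∀ x y : ι → F, Φ ((g : Matrix ι ι F) *ᵥ x) ((g : Matrix ι ι F) *ᵥ y) = Φ x y}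
  one_mem' := by intro x y; simp
  mul_mem' := by
    intro a b ha hb x y
    simp only [Units.val_mul, ← Matrix.mulVec_mulVec]
    rw [ha, hb]
  inv_mem' := by
    intro a ha x y
    have h : ∀ v : ι → F, (a : Matrix ι ι F) *ᵥ (((a⁻¹ : (Matrix ι ι F)ˣ) : Matrix ι ι F) *ᵥ v) = v := by
      intro v
      rw [Matrix.mulVec_mulVec, ← Units.val_mul, mul_inv_cancel, Units.val_one, Matrix.one_mulVec]
    calc Φ ((a⁻¹ : (Matrix ι ι F)ˣ) *ᵥ x) ((a⁻¹ : (Matrix ι ι F)ˣ) *ᵥ y)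
        = Φ ((a : Matrix ι ι F) *ᵥ ((a⁻¹ : (Matrix ι ι F)ˣ) *ᵥ x))
            ((a : Matrix ι ι F) *ᵥ ((a⁻¹ : (Matrix ι ι F)ˣ) *ᵥ y)) := (ha _ _).symm
      _ = Φ x y := by rw [h, h]

/-- The `n × n` matrix `diag(G, 0)` obtained by placing `G` in the upper-left `k × k`
corner and zeros elsewhere. -/
def diagEmbed {F : Type} [Field F] {k n : ℕ} (G : Matrix (Fin k) (Fin k) F) (h : k ≤ n) :
    Matrix (Fin n) (Fin n) F :=
  Matrix.reindex (finSumFinEquiv.trans (finCongr (Nat.add_sub_cancel' h)))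
    (finSumFinEquiv.trans (finCongr (Nat.add_sub_cancel' h)))
    (fromBlocks G 0 0 (0 : Matrix (Fin (n - k)) (Fin (n - k)) F))


/-- The operator `ω(A)` on functions `Hom(F^n, U) → ℂ`,
`(ω(A) f)(S) = ψ((1/2) Tr(G_{β_S} A)) f(S)`. -/
def oscN (F : Type) [Field F] (k n : ℕ) (ψ : AddChar F ℂ)
    (G : Matrix (Fin k) (Fin k) F) (A : Matrix (Fin n) (Fin n) F) :
    (Matrix (Fin k) (Fin n) F → ℂ) →ₗ[ℂ] (Matrix (Fin k) (Fin n) F → ℂ) where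
  toFun f := fun S => ψ ((2 : F)⁻¹ * Matrix.trace ((Sᵀ * G * S) * A)) * f S
  map_add' f g := by
    funext S
    simp [mul_add]
  map_smul' c f := by
    funext S
    simp only [Pi.smul_apply, smul_eq_mul, RingHom.id_apply]
    ring

section Aux

variable {F : Type} [Field F]

lemma aux_two_ne_zero [Fintype F] (hodd : Odd (Fintype.card F)) : (2 : F) ≠ 0 := by
  intro h
  have h2 : ringChar F ∣ 2 := by
    exact_mod_cast (CharP.cast_eq_zero_iff F (ringChar F) 2).mp (by exact_mod_cast h)
  have hp : Nat.Prime (ringChar F) := CharP.char_is_prime F (ringChar F)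
  have h2' : ringChar F = 2 := (Nat.prime_dvd_prime_iff_eq hp Nat.prime_two).mp h2
  have := FiniteField.even_card_of_char_two (F := F) h2'
  simp [Nat.even_iff, Nat.odd_iff] at hodd this
  omega

lemma aux_std_transpose {n : ℕ} (i j : Fin n) (c : F) :
    (Matrix.single i j c)ᵀ = Matrix.single j i c := by
  ext a b
  simp only [transpose_apply, Matrix.single, Matrix.of_apply]
  exact if_congr and_comm rfl rfl

lemma aux_trace_mul_std {n : ℕ} (B : Matrix (Fin n) (Fin n) F) (i j : Fin n) (c : F) :
    Matrix.trace (B * Matrix.single i j c) = c * B j i := by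
  simp [Matrix.trace, Matrix.mul_apply, Matrix.single, Matrix.diag,
    Finset.sum_ite_eq, ite_and, mul_comm]

lemma aux_quad_form {k : Type} [Fintype k] [DecidableEq k]
    (r G : Matrix k k F) (x y : k → F) :
    (r *ᵥ x) ⬝ᵥ (G *ᵥ (r *ᵥ y)) = x ⬝ᵥ ((rᵀ * G * r) *ᵥ y) := by
  rw [mulVec_mulVec, dotProduct_mulVec, dotProduct_mulVec, ← vecMul_transpose,
    vecMul_vecMul, Matrix.mul_assoc]

lemma aux_mat_ext {k : Type} [Fintype k] [DecidableEq k]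
    {M N : Matrix k k F} (h : ∀ x y : k → F, x ⬝ᵥ (M *ᵥ y) = x ⬝ᵥ (N *ᵥ y)) : M = N := by
  ext i j
  simpa using h (Pi.single i 1) (Pi.single j 1)

lemma aux_mem_formStab_iff {k : ℕ} (G : Matrix (Fin k) (Fin k) F)
    (r : (Matrix (Fin k) (Fin k) F)ˣ) :
    r ∈ formStab F (Fin k) (fun u v => u ⬝ᵥ (G *ᵥ v)) ↔
      ((r : Matrix (Fin k) (Fin k) F))ᵀ * G * (r : Matrix (Fin k) (Fin k) F) = G := by
  constructor
  · intro h
    refine aux_mat_ext fun x y => ?_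
    rw [← aux_quad_form]
    exact h x y
  · intro h x y
    show ((r : Matrix (Fin k) (Fin k) F) *ᵥ x) ⬝ᵥ (G *ᵥ ((r : Matrix (Fin k) (Fin k) F) *ᵥ y))
      = x ⬝ᵥ (G *ᵥ y)
    rw [aux_quad_form, h]

lemma aux_right_inv {n k : ℕ} (T : Matrix (Fin k) (Fin n) F)
    (hT : Function.Surjective T.mulVecLin) :
    ∃ T' : Matrix (Fin n) (Fin k) F, T * T' = 1 := by
  obtain ⟨g, hg⟩ := T.mulVecLin.exists_rightInverse_of_surjective
    (by rwa [LinearMap.range_eq_top])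
  refine ⟨LinearMap.toMatrix' g, ?_⟩
  have h : ∀ x, (T * LinearMap.toMatrix' g) *ᵥ x = x := by
    intro x
    rw [← mulVec_mulVec]
    have h2 : (LinearMap.toMatrix' g) *ᵥ x = g x := by
      rw [← Matrix.toLin'_apply, Matrix.toLin'_toMatrix']
    rw [h2]
    exact congrFun (congrArg DFunLike.coe hg) x
  ext i j
  have := congrFun (h (Pi.single j 1)) i
  simpa [mulVec_single, Matrix.one_apply, Pi.single_apply, eq_comm] using this

/-- Key lemma: if `B` is symmetric and `ψ((1/2)Tr(B A)) = 1` for all symmetric `A`,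
then `B = 0`. -/
lemma aux_B_zero [Fintype F] (hodd : Odd (Fintype.card F)) {n : ℕ}
    (ψ : AddChar F ℂ) (hψ : ψ ≠ 1) (B : Matrix (Fin n) (Fin n) F) (hB : B.IsSymm)
    (h : ∀ A : Matrix (Fin n) (Fin n) F, A.IsSymm →
      ψ ((2 : F)⁻¹ * Matrix.trace (B * A)) = 1) : B = 0 := by
  have h2 : (2 : F) ≠ 0 := aux_two_ne_zero hodd
  ext i j
  by_contra hb
  simp only [Matrix.zero_apply] at hb
  obtain ⟨a, ha⟩ := AddChar.ne_one_iff.mp hψ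
  set c : F := a * (B i j)⁻¹ with hc
  have hAsymm : (Matrix.single i j c + Matrix.single j i c).IsSymm := by
    rw [Matrix.IsSymm, transpose_add, aux_std_transpose, aux_std_transpose, add_comm]
  have hBji : B j i = B i j := by
    conv_lhs => rw [← hB]
    rfl
  have htr : Matrix.trace (B * (Matrix.single i j c + Matrix.single j i c))
      = 2 * (c * B i j) := by
    rw [Matrix.mul_add, Matrix.trace_add, aux_trace_mul_std, aux_trace_mul_std, hBji]
    ring
  have := h _ hAsymm
  rw [htr, inv_mul_cancel_left₀ h2, hc, mul_assoc, inv_mul_cancel₀ hb, mul_one] at this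
  exact ha this

/-- Key lemma: if `SᵀGS = TᵀGT` with `G` symmetric invertible and `T` having a right
inverse, then `S = r T` for some `r` with `rᵀGr = G`. -/
lemma aux_orbit {n k : ℕ} (G : Matrix (Fin k) (Fin k) F) (hGnd : IsUnit G)
    (T S : Matrix (Fin k) (Fin n) F) (T' : Matrix (Fin n) (Fin k) F) (hTT' : T * T' = 1)
    (hS : Sᵀ * G * S = Tᵀ * G * T) :
    ∃ R : (Matrix (Fin k) (Fin k) F)ˣ,
      ((R : Matrix (Fin k) (Fin k) F))ᵀ * G * R = G ∧ S = (R : Matrix (Fin k) (Fin k) F) * T := by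
  set r : Matrix (Fin k) (Fin k) F := S * T' with hrdef
  have hr : rᵀ * G * r = G := by
    have e1 : rᵀ * G * r = T'ᵀ * (Sᵀ * G * S) * T' := by
      rw [hrdef, transpose_mul]
      simp only [Matrix.mul_assoc]
    rw [e1, hS]
    have e2 : T'ᵀ * (Tᵀ * G * T) * T' = (T * T')ᵀ * G * (T * T') := by
      rw [transpose_mul]
      simp only [Matrix.mul_assoc]
    rw [e2, hTT']
    simp
  have hGdet : IsUnit G.det := (Matrix.isUnit_iff_isUnit_det G).mp hGnd
  have hrdet : IsUnit r.det := by
    have := congrArg Matrix.det hr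
    rw [Matrix.det_mul, Matrix.det_mul, Matrix.det_transpose] at this
    have h1 : r.det * r.det * G.det = 1 * G.det := by
      rw [one_mul]; linear_combination this
    have h2 : r.det * r.det = 1 := mul_right_cancel₀ hGdet.ne_zero h1
    exact IsUnit.of_mul_eq_one _ h2
  have hrunit : IsUnit r := (Matrix.isUnit_iff_isUnit_det r).mpr hrdet
  obtain ⟨R, hR⟩ := hrunit
  have hM : (Tᵀ * G * T) * (T' * T) = Tᵀ * G * T := by
    have : (Tᵀ * G * T) * (T' * T) = Tᵀ * G * (T * T') * T := by simp only [Matrix.mul_assoc]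
    rw [this, hTT']
    simp [Matrix.mul_assoc]
  have hSrT : Sᵀ * G * (r * T) = Sᵀ * G * S := by
    have : Sᵀ * G * (r * T) = (Sᵀ * G * S) * (T' * T) := by
      rw [hrdef]; simp only [Matrix.mul_assoc]
    rw [this, hS, hM, ← hS]
  have hcancel : (rᵀ * G) * S = (rᵀ * G) * (r * T) := by
    have e1 : (rᵀ * G) * S = T'ᵀ * (Sᵀ * G * S) := by
      rw [hrdef, transpose_mul]; simp only [Matrix.mul_assoc]
    have e2 : (rᵀ * G) * (r * T) = T'ᵀ * (Sᵀ * G * (r * T)) := by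
      rw [hrdef, transpose_mul]; simp only [Matrix.mul_assoc]
    rw [e1, e2, hSrT]
  have hU : IsUnit (rᵀ * G) := by
    refine (IsUnit.mul ?_ hGnd)
    exact (Matrix.isUnit_iff_isUnit_det _).mpr (by rwa [Matrix.det_transpose])
  have hfinal : S = r * T := by
    obtain ⟨U, hUeq⟩ := hU
    have h2 : ∀ X : Matrix (Fin k) (Fin n) F,
        ((U⁻¹ : (Matrix (Fin k) (Fin k) F)ˣ) : Matrix (Fin k) (Fin k) F)
          * (((U : (Matrix (Fin k) (Fin k) F)ˣ) : Matrix (Fin k) (Fin k) F) * X) = X := by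
      intro X
      rw [← Matrix.mul_assoc, ← Units.val_mul, inv_mul_cancel, Units.val_one, Matrix.one_mul]
    rw [hUeq] at h2
    rw [← h2 S, hcancel, h2]
  exact ⟨R, by rw [hR]; exact hr, by rw [hR]; exact hfinal⟩

lemma oscN_apply (F : Type) [Field F] (k n : ℕ) (ψ : AddChar F ℂ)
    (G : Matrix (Fin k) (Fin k) F) (A : Matrix (Fin n) (Fin n) F)
    (f : Matrix (Fin k) (Fin n) F → ℂ) (S : Matrix (Fin k) (Fin n) F) :
    oscN F k n ψ G A f S = ψ ((2 : F)⁻¹ * Matrix.trace ((Sᵀ * G * S) * A)) * f S := rfl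

end Aux

/-- `A ↦ ω(A)` is a representation of the additive group of symmetric
matrices by invertible operators, and for a surjective `T : F_q^n → U`, the
`ψ_{β_T}`-eigenspace of this action is exactly the space of functions supported on the
`O_β`-orbit of `T`. -/
theorem oscN_eigenspace_eq_orbit_functions
    (F : Type) [Field F] [Fintype F] [DecidableEq F] (hodd : Odd (Fintype.card F))
    (n k : ℕ)
    (ψ : AddChar F ℂ) (hψ : ψ ≠ 1)
    (G : Matrix (Fin k) (Fin k) F) (hG : G.IsSymm) (hGnd : IsUnit G)
    (T : Matrix (Fin k) (Fin n) F) (hT : Function.Surjective T.mulVecLin) :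
    (∀ A A' : Matrix (Fin n) (Fin n) F, A.IsSymm → A'.IsSymm →
      oscN F k n ψ G (A + A') = oscN F k n ψ G A * oscN F k n ψ G A') ∧
    (∀ A : Matrix (Fin n) (Fin n) F, A.IsSymm → IsUnit (oscN F k n ψ G A)) ∧
    {f : Matrix (Fin k) (Fin n) F → ℂ |
        ∀ A : Matrix (Fin n) (Fin n) F, A.IsSymm →
          oscN F k n ψ G A f = ψ ((2 : F)⁻¹ * Matrix.trace ((Tᵀ * G * T) * A)) • f}
      = {f : Matrix (Fin k) (Fin n) F → ℂ |
        ∀ S : Matrix (Fin k) (Fin n) F, f S ≠ 0 →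
          ∃ r : ↥(formStab F (Fin k) (fun u v => u ⬝ᵥ (G *ᵥ v))),
            S = ((r : (Matrix (Fin k) (Fin k) F)ˣ) : Matrix (Fin k) (Fin k) F) * T} := by
  have hosc_mul : ∀ A A' : Matrix (Fin n) (Fin n) F,
      oscN F k n ψ G (A + A') = oscN F k n ψ G A * oscN F k n ψ G A' := by
    intro A A'
    apply LinearMap.ext
    intro f
    funext S
    rw [Module.End.mul_apply, oscN_apply, oscN_apply, oscN_apply,
      Matrix.mul_add, Matrix.trace_add, mul_add, AddChar.map_add_eq_mul]
    ring
  refine ⟨fun A A' _ _ => hosc_mul A A', fun A _ => ?_, ?_⟩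
  · refine ⟨⟨oscN F k n ψ G A, oscN F k n ψ G (-A), ?_, ?_⟩, rfl⟩
    · rw [← hosc_mul]
      apply LinearMap.ext
      intro f
      funext S
      rw [oscN_apply]
      simp
    · rw [← hosc_mul]
      apply LinearMap.ext
      intro f
      funext S
      rw [oscN_apply]
      simp
  · obtain ⟨T', hTT'⟩ := aux_right_inv T hT
    ext f
    simp only [Set.mem_setOf_eq]
    constructor
    · intro hf S hfS
      have key : Sᵀ * G * S = Tᵀ * G * T := by
        rw [← sub_eq_zero]
        apply aux_B_zero hodd ψ hψ _ ?_ ?_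
        · -- symmetry of SᵀGS - TᵀGT
          rw [Matrix.IsSymm, transpose_sub]
          congr 1 <;>
          · rw [transpose_mul, transpose_mul, transpose_transpose, hG.eq, Matrix.mul_assoc]
        · intro A hA
          have h1 := congrFun (hf A hA) S
          rw [oscN_apply, Pi.smul_apply, smul_eq_mul] at h1
          have h2 : ψ ((2:F)⁻¹ * Matrix.trace ((Sᵀ * G * S) * A))
              = ψ ((2:F)⁻¹ * Matrix.trace ((Tᵀ * G * T) * A)) := mul_right_cancel₀ hfS h1
          have h3 : ψ ((2:F)⁻¹ * Matrix.trace ((Sᵀ * G * S) * A)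
              - (2:F)⁻¹ * Matrix.trace ((Tᵀ * G * T) * A))
              * ψ ((2:F)⁻¹ * Matrix.trace ((Tᵀ * G * T) * A))
              = 1 * ψ ((2:F)⁻¹ * Matrix.trace ((Tᵀ * G * T) * A)) := by
            rw [← AddChar.map_add_eq_mul, sub_add_cancel, one_mul, h2]
          have h4 := mul_right_cancel₀ (ψ.val_isUnit _).ne_zero h3
          rw [← h4]
          congr 1
          rw [Matrix.sub_mul, Matrix.trace_sub]
          ring
      obtain ⟨R, hR1, hR2⟩ := aux_orbit G hGnd T S T' hTT' key
      exact ⟨⟨R, (aux_mem_formStab_iff G R).mpr hR1⟩, hR2⟩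
    · intro hf A hA
      funext S
      rw [oscN_apply, Pi.smul_apply, smul_eq_mul]
      by_cases h : f S = 0
      · rw [h, mul_zero, mul_zero]
      · obtain ⟨r, hr⟩ := hf S h
        have hrG : ((r : (Matrix (Fin k) (Fin k) F)ˣ) : Matrix (Fin k) (Fin k) F)ᵀ * G
            * ((r : (Matrix (Fin k) (Fin k) F)ˣ) : Matrix (Fin k) (Fin k) F) = G :=
          (aux_mem_formStab_iff G r).mp r.2
        set rm : Matrix (Fin k) (Fin k) F :=
          ((r : (Matrix (Fin k) (Fin k) F)ˣ) : Matrix (Fin k) (Fin k) F) with hrmdef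
        have : Sᵀ * G * S = Tᵀ * G * T := by
          rw [hr, transpose_mul]
          have e : Tᵀ * rmᵀ * G * (rm * T) = Tᵀ * (rmᵀ * G * rm) * T := by
            simp only [Matrix.mul_assoc]
          rw [e, hrG]
        rw [this]
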